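/- Let (Θ, 𝔉, P) be a probability space and, for each n ∈ ℕ, let ξ_{1,n}, ξ_{2,n} : Θ → ℝ be random variables such that each ξ_{i,n} (i = 1,2, n ∈ ℕ) is uniformly distributed on [−1,1] and the whole family {ξ_{1,n} : n ∈ ℕ} ∪ {ξ_{2,n} : n ∈ ℕ} is mutually independent. Let η₁, η₂, L > 0 and let ε satisfy 0 < ε < η₁ + η₂L. Then the event that ε + η₁ξ_{1,n} + η₂Lξ_{2,n} ≥ 0 holds for every n ∈ ℕ has probability zero: P(∀ n ∈ ℕ, ε + η₁ξ_{1,n} + η₂Lξ_{2,n} ≥ 0) = 0. (This is the probabilistic core of the theorem stating that, with noisy data, the unregularized monotonicity reconstruction is empty with probability one.) -/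

import Mathlib

open MeasureTheory ProbabilityTheory

/-- If `ξ (i, n)` (`i = 0,1`, `n ∈ ℕ`) is a mutually independent family of random
variables, each uniformly distributed on `[−1,1]`, and `0 < ε < η₁ + η₂ L` with
`η₁, η₂, L > 0`, then the event that `ε + η₁ ξ(0,n) + η₂ L ξ(1,n) ≥ 0` for every
`n ∈ ℕ` has probability zero. -/
theorem unregularized_reconstruction_empty (Θ : Type*) [MeasurableSpace Θ]
    (P : Measure Θ) [IsProbabilityMeasure P]
    (ξ : Fin 2 × ℕ → Θ → ℝ) (hmeas : ∀ i, Measurable (ξ i))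
    (hunif : ∀ i, Measure.map (ξ i) P =
      (2 : ENNReal)⁻¹ • volume.restrict (Set.Icc (-1 : ℝ) 1))
    (hindep : iIndepFun ξ P)
    (η₁ η₂ L ε : ℝ) (hη₁ : 0 < η₁) (hη₂ : 0 < η₂) (hL : 0 < L)
    (hε0 : 0 < ε) (hε : ε < η₁ + η₂ * L) :
    P {θ | ∀ n : ℕ, 0 ≤ ε + η₁ * ξ (0, n) θ + η₂ * L * ξ (1, n) θ} = 0 := by
  set s : ℝ := η₁ + η₂ * L with hs
  have hspos : 0 < s := by positivity
  set a : ℝ := -ε / s with ha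
  have ha0 : a < 0 := by
    rw [ha]; exact div_neg_of_neg_of_pos (by linarith) hspos
  have ham1 : -1 < a := by
    rw [ha, neg_div]
    linarith [(div_lt_one hspos).mpr hε]
  -- the single-coordinate event probability
  set q : ENNReal := (2 : ENNReal)⁻¹ * ENNReal.ofReal (a + 1) with hq
  have hq0 : q ≠ 0 := by
    rw [hq]
    refine mul_ne_zero (by simp) ?_
    simp [ENNReal.ofReal_eq_zero]
    linarith
  have hmap : ∀ i : Fin 2 × ℕ, P (ξ i ⁻¹' Set.Iio a) = q := by
    intro i
    rw [← Measure.map_apply (hmeas i) measurableSet_Iio, hunif i, Measure.smul_apply,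
      Measure.restrict_apply measurableSet_Iio]
    have : Set.Iio a ∩ Set.Icc (-1 : ℝ) 1 = Set.Ico (-1 : ℝ) a := by
      ext x
      simp only [Set.mem_inter_iff, Set.mem_Iio, Set.mem_Icc, Set.mem_Ico]
      constructor
      · rintro ⟨hx, hx1, _⟩; exact ⟨hx1, hx⟩
      · rintro ⟨hx1, hx⟩; exact ⟨hx, hx1, by linarith⟩
    rw [this, Real.volume_Ico, hq, smul_eq_mul]
    congr 1
    ring_nf
  -- events
  set B : ℕ → Set Θ := fun n => {θ | 0 ≤ ε + η₁ * ξ (0, n) θ + η₂ * L * ξ (1, n) θ} with hB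
  set C : ℕ → Set Θ := fun n => ξ (0, n) ⁻¹' Set.Iio a ∩ ξ (1, n) ⁻¹' Set.Iio a with hC
  have hCmeas : ∀ n, MeasurableSet (C n) := fun n =>
    ((hmeas _) measurableSet_Iio).inter ((hmeas _) measurableSet_Iio)
  have hCq : ∀ n, P (C n) = q * q := by
    intro n
    have hne : ((0 : Fin 2), n) ≠ ((1 : Fin 2), n) := by simp [Prod.ext_iff]
    have := (hindep.indepFun hne).measure_inter_preimage_eq_mul
      (Set.Iio a) (Set.Iio a) measurableSet_Iio measurableSet_Iio
    rw [hC]; rw [this, hmap, hmap]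
  have hBC : ∀ n, B n ⊆ (C n)ᶜ := by
    intro n θ hθ hθC
    obtain ⟨h0, h1⟩ := hθC
    simp only [Set.mem_preimage, Set.mem_Iio] at h0 h1
    have hsa : s * a = -ε := by
      rw [ha]; field_simp
    simp only [hB, Set.mem_setOf_eq] at hθ
    nlinarith [mul_lt_mul_of_pos_left h0 hη₁, mul_lt_mul_of_pos_left h1 (mul_pos hη₂ hL)]
  have hBle : ∀ n, P (B n) ≤ 1 - q * q := by
    intro n
    calc P (B n) ≤ P ((C n)ᶜ) := measure_mono (hBC n)
    _ = 1 - P (C n) := prob_compl_eq_one_sub (hCmeas n)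
    _ = 1 - q * q := by rw [hCq n]
  -- σ-algebras
  set m : Fin 2 × ℕ → MeasurableSpace Θ :=
    fun i => MeasurableSpace.comap (ξ i) inferInstance with hm
  have h_le : ∀ i, m i ≤ ‹MeasurableSpace Θ› := fun i =>
    (measurable_iff_comap_le).mp (hmeas i)
  have hiI : iIndep m P := hindep.iIndep
  have hBmeas' : ∀ (S : Set (Fin 2 × ℕ)) (n : ℕ), (0, n) ∈ S → (1, n) ∈ S →
      MeasurableSet[⨆ i ∈ S, m i] (B n) := by
    intro S n h0 h1
    have hξ : ∀ j : Fin 2 × ℕ, j ∈ S → Measurable[⨆ i ∈ S, m i] (ξ j) := by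
      intro j hj
      exact Measurable.mono (measurable_iff_comap_le.mpr le_rfl)
        (le_biSup m hj) le_rfl
    have hf : Measurable[⨆ i ∈ S, m i]
        (fun θ => ε + η₁ * ξ (0, n) θ + η₂ * L * ξ (1, n) θ) :=
      (measurable_const.add ((hξ _ h0).const_mul η₁)).add ((hξ _ h1).const_mul (η₂ * L))
    exact measurableSet_le measurable_const hf
  -- finite intersections
  have key : ∀ N : ℕ, P (⋂ n ∈ Finset.range N, B n) ≤ (1 - q * q) ^ N := by
    intro N
    induction N with
    | zero => simp
    | succ N ih =>
      have hST : Disjoint {p : Fin 2 × ℕ | p.2 < N} {p : Fin 2 × ℕ | p.2 = N} := by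
        rw [Set.disjoint_left]
        rintro ⟨i, k⟩ hk hk'
        simp only [Set.mem_setOf_eq] at hk hk'
        omega
      have hInd := indep_iSup_of_disjoint h_le hiI hST
      have hA : MeasurableSet[⨆ i ∈ {p : Fin 2 × ℕ | p.2 < N}, m i]
          (⋂ n ∈ Finset.range N, B n) := by
        refine MeasurableSet.biInter (Set.to_countable _) (fun n hn => ?_)
        have hn' : n < N := Finset.mem_range.mp hn
        exact hBmeas' _ n hn' hn'
      have hBN : MeasurableSet[⨆ i ∈ {p : Fin 2 × ℕ | p.2 = N}, m i] (B N) :=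
        hBmeas' _ N rfl rfl
      have heq : (⋂ n ∈ Finset.range (N + 1), B n) =
          (⋂ n ∈ Finset.range N, B n) ∩ B N := by
        rw [Finset.range_add_one]
        rw [Finset.set_biInter_insert]
        exact Set.inter_comm _ _
      rw [heq, (hInd.indepSet_of_measurableSet hA hBN).measure_inter_eq_mul, pow_succ]
      exact mul_le_mul' ih (hBle N)
  -- conclusion
  have hsub : ∀ N : ℕ, {θ | ∀ n : ℕ, 0 ≤ ε + η₁ * ξ (0, n) θ + η₂ * L * ξ (1, n) θ} ⊆
      ⋂ n ∈ Finset.range N, B n := by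
    intro N θ hθ
    exact Set.mem_biInter fun n _ => hθ n
  have hlim : Filter.Tendsto (fun N : ℕ => (1 - q * q : ENNReal) ^ N)
      Filter.atTop (nhds 0) := by
    apply ENNReal.tendsto_pow_atTop_nhds_zero_of_lt_one
    exact ENNReal.sub_lt_self ENNReal.one_ne_top one_ne_zero (mul_ne_zero hq0 hq0)
  have hle0 : P {θ | ∀ n : ℕ, 0 ≤ ε + η₁ * ξ (0, n) θ + η₂ * L * ξ (1, n) θ} ≤ 0 :=
    ge_of_tendsto' hlim fun N => le_trans (measure_mono (hsub N)) (key N)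
  exact le_antisymm hle0 zero_le'
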